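/- Let N ≥ 1 and let K ⊆ ℝ_{≥0}^N be a convex set possessing two distinct extreme points d⁽¹⁾ ≠ d⁽²⁾, each of which is a maximal element of K with respect to the componentwise order. Fix ε ∈ (0,1) and μ⁰ ∈ K, and define Γ⁺ = {λ ∈ ℝ_{≥0}^N : λ ≤ (1−ε)μ + εμ⁰ componentwise for some μ ∈ K}. Then Γ⁺ ≠ K. -/

import Mathlib

/-- if a convex set `K ⊆ ℝ_{≥0}^N` has two distinct extreme points
that are both maximal in `K` (componentwise order), then for any `ε ∈ (0,1)` and
`μ⁰ ∈ K`, the region `Γ⁺` of nonnegative vectors dominated by some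
`(1−ε)μ + εμ⁰` with `μ ∈ K` is strictly smaller than `K`: `Γ⁺ ≠ K`. -/
theorem mixture_dominated_region_ne
    (N : ℕ) (hN : 1 ≤ N) (K : Set (Fin N → ℝ)) (hK : Convex ℝ K)
    (hKpos : ∀ x ∈ K, ∀ i, 0 ≤ x i)
    (d₁ d₂ : Fin N → ℝ)
    (hd₁E : d₁ ∈ Set.extremePoints ℝ K) (hd₂E : d₂ ∈ Set.extremePoints ℝ K)
    (hne : d₁ ≠ d₂)
    (hd₁max : ∀ y ∈ K, d₁ ≤ y → d₁ = y)
    (hd₂max : ∀ y ∈ K, d₂ ≤ y → d₂ = y)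
    (ε : ℝ) (hε : ε ∈ Set.Ioo (0 : ℝ) 1)
    (μ₀ : Fin N → ℝ) (hμ₀ : μ₀ ∈ K) :
    {l : Fin N → ℝ | (∀ i, 0 ≤ l i) ∧ ∃ μ ∈ K, l ≤ (1 - ε) • μ + ε • μ₀} ≠ K := by
  obtain ⟨hε0, hε1⟩ := hε
  intro hEq
  -- key lemma: any extreme maximal point equals μ₀
  have key : ∀ d : Fin N → ℝ, d ∈ Set.extremePoints ℝ K →
      (∀ y ∈ K, d ≤ y → d = y) → d = μ₀ := by
    intro d hdE hdmax
    have hdK : d ∈ K := hdE.1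
    have hdΓ : d ∈ {l : Fin N → ℝ | (∀ i, 0 ≤ l i) ∧ ∃ μ ∈ K, l ≤ (1 - ε) • μ + ε • μ₀} := by
      rw [hEq]; exact hdK
    obtain ⟨-, μ, hμK, hle⟩ := hdΓ
    have hcomb : (1 - ε) • μ + ε • μ₀ ∈ K :=
      hK hμK hμ₀ (by linarith) (le_of_lt hε0) (by ring)
    have hdeq : d = (1 - ε) • μ + ε • μ₀ := hdmax _ hcomb hle
    have hopen : d ∈ openSegment ℝ μ μ₀ :=
      ⟨1 - ε, ε, by linarith, hε0, by ring, hdeq.symm⟩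
    exact (hdE.2 hμ₀ hμK (by rw [openSegment_symm]; exact hopen)).symm
  exact hne ((key d₁ hd₁E hd₁max).trans (key d₂ hd₂E hd₂max).symm)
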